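/- Let S and Y be finite alphabets and let (S,Y) have joint pmf P_{S,Y} with strictly positive marginals P_S and P_Y. Suppose Y is an (ε_l, ε_u)-ALIP version of S, i.e., e^{-ε_l} ≤ P_{S,Y}(s,y)/(P_S(s)P_Y(y)) ≤ e^{ε_u} for all s, y, with ε_l, ε_u ≥ 0. Then, taking ε = ε_l + ε_u, the channel P_{Y|S} satisfies ε-local differential privacy, the Shannon mutual information satisfies I(S;Y) ≤ ε_u, the maximal leakage satisfies log Σ_y P_Y(y) max_s ℓ(s,y) ≤ ε_u, and for every α > 1 both the Sibson mutual information I_α^S(S;Y) and the Arimoto mutual information I_α^A(S;Y) are at most (α/(α-1))·ε_u. -/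
import Mathlib


open Real BigOperators

/-- Properties of an (ε_l, ε_u)-ALIP private release: LDP, mutual information,
    maximal leakage, Sibson MI, and Arimoto MI bounds. -/
theorem alip_properties {S Y : Type*} [Fintype S] [Fintype Y] [Nonempty S]
    (P : S → Y → ℝ) (hPnn : ∀ s y, 0 ≤ P s y) (hPsum : ∑ s, ∑ y, P s y = 1)
    (PS : S → ℝ) (PY : Y → ℝ)
    (hPS : ∀ s, PS s = ∑ y, P s y) (hPY : ∀ y, PY y = ∑ s, P s y)
    (hPSpos : ∀ s, 0 < PS s) (hPYpos : ∀ y, 0 < PY y)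
    (εl εu : ℝ) (hεl : 0 ≤ εl) (hεu : 0 ≤ εu)
    (hALIP : ∀ s y, Real.exp (-εl) ≤ P s y / (PS s * PY y) ∧
                    P s y / (PS s * PY y) ≤ Real.exp εu) :
    (∀ (y : Y) (s s' : S),
        (P s y / PS s) / (P s' y / PS s') ≤ Real.exp (εl + εu)) ∧
    (∑ s, ∑ y, P s y * Real.log (P s y / (PS s * PY y)) ≤ εu) ∧
    (Real.log (∑ y, PY y *
        Finset.univ.sup' Finset.univ_nonempty (fun s => P s y / (PS s * PY y))) ≤ εu) ∧
    (∀ α : ℝ, 1 < α →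
      (α / (α - 1)) * Real.log (∑ y, (∑ s, PS s * (P s y / PS s) ^ α) ^ (1/α)) ≤
          (α / (α - 1)) * εu ∧
      (α / (α - 1)) * Real.log ((∑ y, PY y * (∑ s, (P s y / PY y) ^ α) ^ (1/α)) /
            (∑ s, PS s ^ α) ^ (1/α)) ≤
          (α / (α - 1)) * εu) := by
  have hden : ∀ s y, (0:ℝ) < PS s * PY y := fun s y => mul_pos (hPSpos s) (hPYpos y)
  have hpos : ∀ s y, 0 < P s y := by
    intro s y
    have h : 0 < P s y / (PS s * PY y) := lt_of_lt_of_le (Real.exp_pos _) (hALIP s y).1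
    have h2 := mul_pos h (hden s y)
    rwa [div_mul_cancel₀ _ (ne_of_gt (hden s y))] at h2
  have hub : ∀ s y, P s y ≤ Real.exp εu * (PS s * PY y) := fun s y =>
    (div_le_iff₀ (hden s y)).mp (hALIP s y).2
  have hlb : ∀ s y, Real.exp (-εl) * (PS s * PY y) ≤ P s y := fun s y =>
    (le_div_iff₀ (hden s y)).mp (hALIP s y).1
  have hPYsum : ∑ y, PY y = 1 := by
    simp_rw [hPY]; rw [Finset.sum_comm]; exact hPsum
  have hPSsum : ∑ s, PS s = 1 := by simp_rw [hPS]; exact hPsum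
  haveI : Nonempty Y := by
    by_contra h
    rw [not_nonempty_iff] at h
    simp [Finset.univ_eq_empty] at hPYsum
  refine ⟨?_, ?_, ?_, ?_⟩
  · -- LDP
    intro y s s'
    have h1 : P s y / PS s ≤ Real.exp εu * PY y := by
      rw [div_le_iff₀ (hPSpos s)]
      calc P s y ≤ Real.exp εu * (PS s * PY y) := hub s y
        _ = Real.exp εu * PY y * PS s := by ring
    have h2 : Real.exp (-εl) * PY y ≤ P s' y / PS s' := by
      rw [le_div_iff₀ (hPSpos s')]
      calc Real.exp (-εl) * PY y * PS s' = Real.exp (-εl) * (PS s' * PY y) := by ring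
        _ ≤ P s' y := hlb s' y
    have h3 : 0 < Real.exp (-εl) * PY y := mul_pos (Real.exp_pos _) (hPYpos y)
    calc (P s y / PS s) / (P s' y / PS s')
        ≤ (Real.exp εu * PY y) / (Real.exp (-εl) * PY y) :=
          div_le_div₀ (mul_nonneg (le_of_lt (Real.exp_pos _)) (le_of_lt (hPYpos y))) h1 h3 h2
      _ = Real.exp εu / Real.exp (-εl) := by
          rw [mul_div_mul_right _ _ (ne_of_gt (hPYpos y))]
      _ = Real.exp (εl + εu) := by rw [← Real.exp_sub]; ring_nf
  · -- Mutual information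
    have key : ∀ s y, P s y * Real.log (P s y / (PS s * PY y)) ≤ P s y * εu := by
      intro s y
      refine mul_le_mul_of_nonneg_left ?_ (hPnn s y)
      rw [Real.log_le_iff_le_exp (div_pos (hpos s y) (hden s y))]
      exact (hALIP s y).2
    calc ∑ s, ∑ y, P s y * Real.log (P s y / (PS s * PY y))
        ≤ ∑ s, ∑ y, P s y * εu :=
          Finset.sum_le_sum (fun s _ => Finset.sum_le_sum (fun y _ => key s y))
      _ = εu := by simp_rw [← Finset.sum_mul]; rw [hPsum, one_mul]
  · -- Maximal leakage
    have hsup : ∀ y, Finset.univ.sup' Finset.univ_nonempty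
        (fun s => P s y / (PS s * PY y)) ≤ Real.exp εu :=
      fun y => Finset.sup'_le _ _ (fun s _ => (hALIP s y).2)
    have hsuppos : ∀ y, 0 < Finset.univ.sup' Finset.univ_nonempty
        (fun s => P s y / (PS s * PY y)) := by
      intro y
      refine lt_of_lt_of_le (Real.exp_pos (-εl)) ?_
      exact le_trans (hALIP (Classical.arbitrary S) y).1
        (Finset.le_sup' (fun s => P s y / (PS s * PY y)) (Finset.mem_univ (Classical.arbitrary S)))
    have hposum : 0 < ∑ y, PY y * Finset.univ.sup' Finset.univ_nonempty
        (fun s => P s y / (PS s * PY y)) :=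
      Finset.sum_pos (fun y _ => mul_pos (hPYpos y) (hsuppos y)) Finset.univ_nonempty
    rw [Real.log_le_iff_le_exp hposum]
    calc ∑ y, PY y * Finset.univ.sup' Finset.univ_nonempty
          (fun s => P s y / (PS s * PY y))
        ≤ ∑ y, PY y * Real.exp εu :=
          Finset.sum_le_sum (fun y _ => mul_le_mul_of_nonneg_left (hsup y) (le_of_lt (hPYpos y)))
      _ = Real.exp εu := by rw [← Finset.sum_mul, hPYsum, one_mul]
  · -- Sibson and Arimoto
    intro α hα
    have hα0 : (0:ℝ) < α := lt_trans one_pos hα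
    have hinv : (0:ℝ) ≤ 1/α := (one_div_pos.mpr hα0).le
    have hcoef : (0:ℝ) ≤ α / (α - 1) := le_of_lt (div_pos hα0 (by linarith))
    constructor
    · -- Sibson
      refine mul_le_mul_of_nonneg_left ?_ hcoef
      have hterm : ∀ y, (∑ s, PS s * (P s y / PS s) ^ α) ^ (1/α) ≤ Real.exp εu * PY y := by
        intro y
        have h1 : ∑ s, PS s * (P s y / PS s) ^ α ≤ (Real.exp εu * PY y) ^ α := by
          calc ∑ s, PS s * (P s y / PS s) ^ α
              ≤ ∑ s, PS s * (Real.exp εu * PY y) ^ α := by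
                refine Finset.sum_le_sum (fun s _ => ?_)
                refine mul_le_mul_of_nonneg_left ?_ (le_of_lt (hPSpos s))
                refine Real.rpow_le_rpow (le_of_lt (div_pos (hpos s y) (hPSpos s))) ?_ (le_of_lt hα0)
                rw [div_le_iff₀ (hPSpos s)]
                calc P s y ≤ Real.exp εu * (PS s * PY y) := hub s y
                  _ = Real.exp εu * PY y * PS s := by ring
            _ = (Real.exp εu * PY y) ^ α := by rw [← Finset.sum_mul, hPSsum, one_mul]
        calc (∑ s, PS s * (P s y / PS s) ^ α) ^ (1/α)
            ≤ ((Real.exp εu * PY y) ^ α) ^ (1/α) := by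
              refine Real.rpow_le_rpow ?_ h1 hinv
              exact Finset.sum_nonneg (fun s _ => mul_nonneg (hPSpos s).le (Real.rpow_nonneg (div_nonneg (hPnn s y) (hPSpos s).le) _))
          _ = Real.exp εu * PY y := by
              rw [← Real.rpow_mul (mul_nonneg (le_of_lt (Real.exp_pos _)) (le_of_lt (hPYpos y))), mul_one_div, div_self (ne_of_gt hα0),
                Real.rpow_one]
      have hpos' : 0 < ∑ y, (∑ s, PS s * (P s y / PS s) ^ α) ^ (1/α) := by
        refine Finset.sum_pos (fun y _ => ?_) Finset.univ_nonempty
        refine Real.rpow_pos_of_pos ?_ _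
        refine Finset.sum_pos (fun s _ => ?_) Finset.univ_nonempty
        exact mul_pos (hPSpos s) (Real.rpow_pos_of_pos (div_pos (hpos s y) (hPSpos s)) _)
      rw [Real.log_le_iff_le_exp hpos']
      calc ∑ y, (∑ s, PS s * (P s y / PS s) ^ α) ^ (1/α)
          ≤ ∑ y, Real.exp εu * PY y := Finset.sum_le_sum (fun y _ => hterm y)
        _ = Real.exp εu := by rw [← Finset.mul_sum, hPYsum, mul_one]
    · -- Arimoto
      refine mul_le_mul_of_nonneg_left ?_ hcoef
      have hDpos : 0 < (∑ s, PS s ^ α) ^ (1/α) :=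
        Real.rpow_pos_of_pos (Finset.sum_pos
          (fun s _ => Real.rpow_pos_of_pos (hPSpos s) _) Finset.univ_nonempty) _
      have hterm : ∀ y, (∑ s, (P s y / PY y) ^ α) ^ (1/α)
          ≤ Real.exp εu * (∑ s, PS s ^ α) ^ (1/α) := by
        intro y
        have h1 : ∑ s, (P s y / PY y) ^ α ≤ Real.exp εu ^ α * ∑ s, PS s ^ α := by
          rw [Finset.mul_sum]
          refine Finset.sum_le_sum (fun s _ => ?_)
          have hb : P s y / PY y ≤ Real.exp εu * PS s := by
            rw [div_le_iff₀ (hPYpos y)]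
            calc P s y ≤ Real.exp εu * (PS s * PY y) := hub s y
              _ = Real.exp εu * PS s * PY y := by ring
          calc (P s y / PY y) ^ α ≤ (Real.exp εu * PS s) ^ α :=
              Real.rpow_le_rpow (le_of_lt (div_pos (hpos s y) (hPYpos y))) hb (le_of_lt hα0)
            _ = Real.exp εu ^ α * PS s ^ α :=
              Real.mul_rpow (le_of_lt (Real.exp_pos _)) (le_of_lt (hPSpos s))
        calc (∑ s, (P s y / PY y) ^ α) ^ (1/α)
            ≤ (Real.exp εu ^ α * ∑ s, PS s ^ α) ^ (1/α) := by
              refine Real.rpow_le_rpow ?_ h1 hinv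
              exact Finset.sum_nonneg (fun s _ => Real.rpow_nonneg
                (le_of_lt (div_pos (hpos s y) (hPYpos y))) _)
          _ = Real.exp εu * (∑ s, PS s ^ α) ^ (1/α) := by
              rw [Real.mul_rpow (by positivity)
                  (Finset.sum_nonneg (fun s _ => Real.rpow_nonneg (le_of_lt (hPSpos s)) _)),
                ← Real.rpow_mul (le_of_lt (Real.exp_pos _)), mul_one_div,
                div_self (ne_of_gt hα0), Real.rpow_one]
      have hnum : 0 < ∑ y, PY y * (∑ s, (P s y / PY y) ^ α) ^ (1/α) := by
        refine Finset.sum_pos (fun y _ => ?_) Finset.univ_nonempty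
        refine mul_pos (hPYpos y) (Real.rpow_pos_of_pos ?_ _)
        exact Finset.sum_pos (fun s _ =>
          Real.rpow_pos_of_pos (div_pos (hpos s y) (hPYpos y)) _) Finset.univ_nonempty
      rw [Real.log_le_iff_le_exp (div_pos hnum hDpos), div_le_iff₀ hDpos]
      calc ∑ y, PY y * (∑ s, (P s y / PY y) ^ α) ^ (1/α)
          ≤ ∑ y, PY y * (Real.exp εu * (∑ s, PS s ^ α) ^ (1/α)) :=
            Finset.sum_le_sum (fun y _ =>
              mul_le_mul_of_nonneg_left (hterm y) (le_of_lt (hPYpos y)))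
        _ = Real.exp εu * (∑ s, PS s ^ α) ^ (1/α) := by
            rw [← Finset.sum_mul, hPYsum, one_mul]
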